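/- Let P ∈ ℂ[x_1,…,x_n] be a nonzero polynomial, let ℓ ≥ 1 be an integer, and suppose C > 0, δ > 0 and y_0 ∈ (0,1] are such that μ_n(S_n(P,y)) ≤ C · y^δ for all 0 < y ≤ y_0. Then for all 0 < y ≤ y_0: 0 ≤ (−1)^ℓ ∫_{S_n(P,y)} (log|P(z_1,…,z_n)|)^ℓ dμ_n ≤ C · J_{ℓ,δ}(y). -/

import Mathlib

open MeasureTheory Real
open scoped ENNReal NNReal

/-- `J_{ℓ,δ}(y) := (−1)^ℓ δ ∫_0^y (log z)^ℓ z^{δ−1} dz`. -/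
noncomputable def J (ℓ : ℕ) (δ y : ℝ) : ℝ :=
  (-1:ℝ)^ℓ * δ * ∫ z in (0:ℝ)..y, (Real.log z)^ℓ * z ^ (δ - 1)

/-- The parameter box `(0, 2π]ⁿ` parametrizing the torus `𝕋ⁿ`. -/
noncomputable def torusBox (n : ℕ) : Set (Fin n → ℝ) :=
  Set.univ.pi fun _ : Fin n => Set.Ioc (0:ℝ) (2*π)

/-- Evaluation of `P` at `(e^{iθ₁},…,e^{iθₙ})`. -/
noncomputable def evalTorus {n : ℕ} (P : MvPolynomial (Fin n) ℂ) (θ : Fin n → ℝ) : ℂ :=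
  MvPolynomial.eval (fun j => Complex.exp ((θ j : ℂ) * Complex.I)) P

/-- `S_n(P,y)` in the parameter space: `{θ : |P(e^{iθ₁},…,e^{iθₙ})| < y}`. -/
noncomputable def Sn {n : ℕ} (P : MvPolynomial (Fin n) ℂ) (y : ℝ) : Set (Fin n → ℝ) :=
  {θ : Fin n → ℝ | ‖evalTorus P θ‖ < y}

/-- Integrability of `(-log z)^k z^(δ-1)` on `(0,y]`. -/
lemma integrableOn_neg_log_pow_rpow (k : ℕ) {δ y : ℝ} (hδ : 0 < δ) (h0 : 0 < y) (h1 : y ≤ 1) :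
    IntegrableOn (fun z => (-Real.log z) ^ k * z ^ (δ - 1)) (Set.Ioc 0 y) := by
  set ε : ℝ := δ / (2 * (k + 1)) with hεdef
  have hεpos : 0 < ε := by positivity
  have hkε : (k : ℝ) * ε ≤ δ / 2 := by
    rw [hεdef, mul_div_assoc', div_le_div_iff₀ (by positivity) two_pos]
    nlinarith [Nat.cast_nonneg (α := ℝ) k]
  have hmaj : IntegrableOn (fun z => ε⁻¹ ^ k * z ^ (δ / 2 - 1)) (Set.Ioc 0 y) := by
    have h := intervalIntegral.intervalIntegrable_rpow' (a := 0) (b := y)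
      (r := δ / 2 - 1) (by linarith)
    rw [intervalIntegrable_iff_integrableOn_Ioc_of_le h0.le] at h
    exact h.const_mul _
  refine hmaj.mono' ?_ ?_
  · exact Measurable.aestronglyMeasurable
      ((Real.measurable_log.neg.pow_const k).mul (by fun_prop))
  · filter_upwards [ae_restrict_mem measurableSet_Ioc] with z hz
    have hz0 : 0 < z := hz.1
    have hz1 : z ≤ 1 := hz.2.trans h1
    have hlog : 0 ≤ -Real.log z := neg_nonneg.2 (Real.log_nonpos hz0.le hz1)
    have hrp : (0:ℝ) ≤ z ^ (δ - 1) := Real.rpow_nonneg hz0.le _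
    rw [Real.norm_eq_abs, abs_of_nonneg (mul_nonneg (pow_nonneg hlog k) hrp)]
    have hb : -Real.log z ≤ ε⁻¹ * z ^ (-ε) := by
      have := Real.log_le_rpow_div (x := z⁻¹) (by positivity) hεpos
      rw [Real.log_inv, Real.inv_rpow hz0.le] at this
      rw [Real.rpow_neg hz0.le]
      calc -Real.log z ≤ (z ^ ε)⁻¹ / ε := this
        _ = ε⁻¹ * (z ^ ε)⁻¹ := by ring
    calc (-Real.log z) ^ k * z ^ (δ - 1)
        ≤ (ε⁻¹ * z ^ (-ε)) ^ k * z ^ (δ - 1) := by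
          exact mul_le_mul_of_nonneg_right (pow_le_pow_left₀ hlog hb k) hrp
      _ = ε⁻¹ ^ k * (z ^ ((-ε) * k) * z ^ (δ - 1)) := by
          rw [mul_pow, ← Real.rpow_natCast (z ^ (-ε)) k, ← Real.rpow_mul hz0.le]
          ring
      _ = ε⁻¹ ^ k * z ^ ((-ε) * k + (δ - 1)) := by
          rw [← Real.rpow_add hz0]
      _ ≤ ε⁻¹ ^ k * z ^ (δ / 2 - 1) := by
          apply mul_le_mul_of_nonneg_left _ (by positivity)
          apply Real.rpow_le_rpow_of_exponent_ge hz0 hz1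
          nlinarith [hkε]

lemma hasDerivAt_neg_log_pow (ℓ : ℕ) {z : ℝ} (hz : z ≠ 0) :
    HasDerivAt (fun w => (-Real.log w) ^ ℓ) ((ℓ:ℝ) * (-Real.log z) ^ (ℓ - 1) * (-z⁻¹)) z :=
  ((Real.hasDerivAt_log hz).neg).pow ℓ

lemma integral_H {x y : ℝ} (ℓ : ℕ) (hx : 0 < x) (hxy : x ≤ y) :
    ∫ z in x..y, (ℓ:ℝ) * (-Real.log z) ^ (ℓ - 1) * z⁻¹
      = (-Real.log x) ^ ℓ - (-Real.log y) ^ ℓ := by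
  have hsub : Set.uIcc x y ⊆ {(0:ℝ)}ᶜ := by
    rw [Set.uIcc_of_le hxy]
    intro z hz
    exact (lt_of_lt_of_le hx hz.1).ne'
  have hcont : ContinuousOn (fun z : ℝ => (ℓ:ℝ) * (-Real.log z) ^ (ℓ-1) * (-z⁻¹))
      (Set.uIcc x y) := by
    apply ContinuousOn.mul
    · exact continuousOn_const.mul ((Real.continuousOn_log.mono hsub).neg.pow _)
    · exact (continuousOn_inv₀.mono hsub).neg
  have hint := hcont.intervalIntegrable (μ := volume)
  have hftc := intervalIntegral.integral_eq_sub_of_hasDerivAt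
    (f := fun w => (-Real.log w) ^ ℓ)
    (f' := fun z => (ℓ:ℝ) * (-Real.log z) ^ (ℓ-1) * (-z⁻¹))
    (fun z hz => hasDerivAt_neg_log_pow ℓ
      (by rw [Set.uIcc_of_le hxy] at hz; exact (lt_of_lt_of_le hx hz.1).ne')) hint
  have h2 : ∫ z in x..y, (ℓ:ℝ) * (-Real.log z) ^ (ℓ-1) * z⁻¹
      = - ∫ z in x..y, (ℓ:ℝ) * (-Real.log z) ^ (ℓ-1) * (-z⁻¹) := by
    rw [← intervalIntegral.integral_neg]
    congr 1; funext z; ring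
  rw [h2, hftc]; ring

lemma J_key {ℓ : ℕ} (hℓ : 1 ≤ ℓ) {δ y : ℝ} (hδ : 0 < δ) (h0 : 0 < y) (h1 : y ≤ 1) :
    δ * ∫ z in (0:ℝ)..y, (-Real.log z) ^ ℓ * z ^ (δ - 1)
      = (-Real.log y) ^ ℓ * y ^ δ
        + (ℓ:ℝ) * ∫ z in (0:ℝ)..y, (-Real.log z) ^ (ℓ - 1) * z ^ (δ - 1) := by
  have hℓ0 : ℓ ≠ 0 := by omega
  set F : ℝ → ℝ := fun z => (-Real.log z) ^ ℓ * z ^ δ with hF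
  set g : ℝ → ℝ := fun z => δ * ((-Real.log z) ^ ℓ * z ^ (δ-1))
      - (ℓ:ℝ) * ((-Real.log z) ^ (ℓ-1) * z ^ (δ-1)) with hg
  have hint1 : IntervalIntegrable (fun z => (-Real.log z) ^ ℓ * z ^ (δ-1)) volume 0 y :=
    (intervalIntegrable_iff_integrableOn_Ioc_of_le h0.le).2
      (integrableOn_neg_log_pow_rpow ℓ hδ h0 h1)
  have hint2 : IntervalIntegrable (fun z => (-Real.log z) ^ (ℓ-1) * z ^ (δ-1)) volume 0 y :=
    (intervalIntegrable_iff_integrableOn_Ioc_of_le h0.le).2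
      (integrableOn_neg_log_pow_rpow (ℓ-1) hδ h0 h1)
  have hintg : IntervalIntegrable g volume 0 y := (hint1.const_mul δ).sub (hint2.const_mul _)
  have hF0 : F 0 = 0 := by
    simp [hF, Real.log_zero, zero_pow hℓ0]
  have hcont : ContinuousOn F (Set.Icc 0 y) := by
    intro z hz
    rcases eq_or_lt_of_le hz.1 with h | h
    · subst h
      have key : Filter.Tendsto (fun z : ℝ => (-(Real.log z * z ^ (δ/(ℓ:ℝ)))) ^ ℓ)
          (nhdsWithin 0 (Set.Ioi 0)) (nhds 0) := by
        have h1 := ((tendsto_log_mul_rpow_nhdsGT_zero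
          (by positivity : 0 < δ/(ℓ:ℝ))).neg).pow ℓ
        simpa [zero_pow hℓ0] using h1
      have heq : Set.EqOn F (fun z : ℝ => (-(Real.log z * z ^ (δ/(ℓ:ℝ)))) ^ ℓ)
          (Set.Ioi 0) := by
        intro z hz'
        have hz0 : (0:ℝ) < z := hz'
        have hzp : (z ^ (δ/(ℓ:ℝ))) ^ ℓ = z ^ δ := by
          rw [← Real.rpow_natCast (z ^ (δ/(ℓ:ℝ))) ℓ, ← Real.rpow_mul hz0.le,
            div_mul_cancel₀]
          exact_mod_cast hℓ0
        simp only [hF]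
        rw [← hzp, ← mul_pow]
        congr 1; ring
      have htend : Filter.Tendsto F (nhdsWithin 0 (Set.Ioi 0)) (nhds 0) :=
        key.congr' (Filter.eventuallyEq_of_mem self_mem_nhdsWithin fun z hz' =>
          (heq hz').symm)
      have hpure : Filter.Tendsto F (pure (0:ℝ)) (nhds 0) := by
        have := tendsto_pure_nhds F 0
        rwa [hF0] at this
      have hsup : Filter.Tendsto F (pure (0:ℝ) ⊔ nhdsWithin 0 (Set.Ioi 0)) (nhds 0) := by
        rw [Filter.tendsto_sup]; exact ⟨hpure, htend⟩
      have hmono : nhdsWithin (0:ℝ) (Set.Icc 0 y) ≤ pure 0 ⊔ nhdsWithin 0 (Set.Ioi 0) := by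
        rw [← nhdsWithin_insert]
        apply nhdsWithin_mono
        intro w hw
        rcases eq_or_lt_of_le hw.1 with h' | h'
        · exact Or.inl h'.symm
        · exact Or.inr h'
      have hfin := hsup.mono_left hmono
      rw [ContinuousWithinAt, hF0]
      exact hfin
    · apply ContinuousAt.continuousWithinAt
      exact ((Real.continuousAt_log h.ne').neg.pow ℓ).mul
        (Real.continuousAt_rpow_const z δ (Or.inl h.ne'))
  have hderiv : ∀ z ∈ Set.Ioo (0:ℝ) y, HasDerivWithinAt F (g z) (Set.Ioi z) z := by
    intro z hz
    have hz0 : (0:ℝ) < z := hz.1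
    have h1 := hasDerivAt_neg_log_pow ℓ hz0.ne'
    have h2 := Real.hasDerivAt_rpow_const (x := z) (p := δ) (Or.inl hz0.ne')
    have h3 := h1.mul h2
    have hgz : g z = (ℓ:ℝ) * (-Real.log z) ^ (ℓ-1) * (-z⁻¹) * z ^ δ
        + (-Real.log z) ^ ℓ * (δ * z ^ (δ-1)) := by
      rw [hg]
      simp only
      rw [Real.rpow_sub_one hz0.ne']
      field_simp
      ring
    rw [hgz]
    exact h3.hasDerivWithinAt
  have hftc := intervalIntegral.integral_eq_sub_of_hasDeriv_right_of_le h0.le hcont hderiv hintg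
  rw [hF0, sub_zero] at hftc
  have hsplit : ∫ z in (0:ℝ)..y, g z
      = δ * (∫ z in (0:ℝ)..y, (-Real.log z) ^ ℓ * z ^ (δ-1))
        - (ℓ:ℝ) * ∫ z in (0:ℝ)..y, (-Real.log z) ^ (ℓ-1) * z ^ (δ-1) := by
    rw [hg]
    rw [intervalIntegral.integral_sub (hint1.const_mul δ) (hint2.const_mul _),
      intervalIntegral.integral_const_mul, intervalIntegral.integral_const_mul]
  rw [hsplit] at hftc
  have hFy : F y = (-Real.log y) ^ ℓ * y ^ δ := rfl
  linarith [hftc]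

lemma J_alt (ℓ : ℕ) (δ y : ℝ) :
    J ℓ δ y = δ * ∫ z in (0:ℝ)..y, (-Real.log z) ^ ℓ * z ^ (δ - 1) := by
  have h : ∀ z : ℝ, (-Real.log z) ^ ℓ * z ^ (δ - 1)
      = (-1:ℝ)^ℓ * ((Real.log z) ^ ℓ * z ^ (δ - 1)) := by
    intro z
    rw [neg_pow]
    ring
  rw [J]
  simp_rw [h]
  rw [intervalIntegral.integral_const_mul]
  ring

lemma main_aux {α : Type*} [MeasurableSpace α] (μ : Measure α) [SFinite μ]
    (q : α → ℝ) (hq : Measurable q) (hq0 : ∀ θ, 0 ≤ q θ)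
    {ℓ : ℕ} (hℓ : 1 ≤ ℓ) {C δ y₀ : ℝ} (hC : 0 < C) (hδ : 0 < δ) (hy₀1 : y₀ ≤ 1)
    (hbound : ∀ y : ℝ, 0 < y → y ≤ y₀ → μ {θ | q θ < y} ≤ ENNReal.ofReal (C * y ^ δ))
    {y : ℝ} (hy : 0 < y) (hyle : y ≤ y₀) :
    ∫ θ, Set.indicator {θ' | q θ' < y} (fun θ' => (-Real.log (q θ'))^ℓ) θ ∂μ
      ≤ C * J ℓ δ y := by
  have hy1 : y ≤ 1 := hyle.trans hy₀1
  have hℓ0 : ℓ ≠ 0 := by omega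
  have hSy : MeasurableSet {θ | q θ < y} := measurableSet_lt hq measurable_const
  set H : ℝ → ℝ := fun z => (ℓ:ℝ) * (-Real.log z) ^ (ℓ-1) * z⁻¹ with hH
  have hHmeas : Measurable H :=
    ((measurable_const.mul (Real.measurable_log.neg.pow_const _)).mul measurable_inv)
  have hnn : ∀ θ, 0 ≤ Set.indicator {θ' | q θ' < y} (fun θ' => (-Real.log (q θ'))^ℓ) θ := by
    intro θ
    apply Set.indicator_nonneg
    intro θ' hθ'
    exact pow_nonneg (neg_nonneg.2 (Real.log_nonpos (hq0 θ')
      (le_of_lt (lt_of_lt_of_le hθ' hy1)))) _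
  have hmeas : AEStronglyMeasurable
      (Set.indicator {θ' | q θ' < y} (fun θ' => (-Real.log (q θ'))^ℓ)) μ :=
    (((Real.measurable_log.comp hq).neg.pow_const ℓ).indicator hSy).aestronglyMeasurable
  rw [integral_eq_lintegral_of_nonneg_ae (Filter.Eventually.of_forall hnn) hmeas]
  have hJint : ∀ k : ℕ, 0 ≤ ∫ z in (0:ℝ)..y, (-Real.log z) ^ k * z ^ (δ - 1) := by
    intro k
    apply intervalIntegral.integral_nonneg hy.le
    intro u hu
    apply mul_nonneg _ (Real.rpow_nonneg hu.1 _)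
    apply pow_nonneg
    rcases eq_or_lt_of_le hu.1 with h | h
    · simp [← h]
    · exact neg_nonneg.2 (Real.log_nonpos h.le (hu.2.trans hy1))
  have hCJ : 0 ≤ C * J ℓ δ y := by
    apply mul_nonneg hC.le
    rw [J_alt]
    exact mul_nonneg hδ.le (hJint ℓ)
  apply ENNReal.toReal_le_of_le_ofReal hCJ
  set G : α → ℝ → ℝ≥0∞ := fun θ z => if q θ < z then ENNReal.ofReal (H z) else 0 with hG
  have hlogy : 0 ≤ -Real.log y := neg_nonneg.2 (Real.log_nonpos hy.le hy1)
  -- pointwise claim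
  have claim1 : ∀ θ,
      ENNReal.ofReal (Set.indicator {θ' | q θ' < y} (fun θ' => (-Real.log (q θ'))^ℓ) θ)
      ≤ Set.indicator {θ' | q θ' < y} (fun _ => ENNReal.ofReal ((-Real.log y)^ℓ)) θ
        + ∫⁻ z in Set.Ioo 0 y, G θ z := by
    intro θ
    by_cases hθ : θ ∈ {θ' | q θ' < y}
    · rw [Set.indicator_of_mem hθ, Set.indicator_of_mem hθ]
      rcases eq_or_lt_of_le (hq0 θ) with hx0 | hx0
      · rw [← hx0]
        simp [Real.log_zero, zero_pow hℓ0]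
      · have hxy : q θ < y := hθ
        have hGθ : ∀ z, G θ z
            = Set.indicator (Set.Ioi (q θ)) (fun z => ENNReal.ofReal (H z)) z := by
          intro z
          rw [hG]
          simp [Set.indicator_apply, Set.mem_Ioi]
        have hset : Set.Ioi (q θ) ∩ Set.Ioo 0 y = Set.Ioo (q θ) y := by
          ext z
          simp only [Set.mem_inter_iff, Set.mem_Ioi, Set.mem_Ioo]
          constructor
          · rintro ⟨h1, _, h3⟩; exact ⟨h1, h3⟩
          · rintro ⟨h1, h2⟩; exact ⟨h1, hx0.trans h1, h2⟩
        have hIoo : ∫⁻ z in Set.Ioo 0 y, G θ z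
            = ∫⁻ z in Set.Ioo (q θ) y, ENNReal.ofReal (H z) := by
          simp_rw [hGθ]
          rw [lintegral_indicator measurableSet_Ioi,
            Measure.restrict_restrict measurableSet_Ioi, hset]
        have hsub2 : Set.Icc (q θ) y ⊆ {(0:ℝ)}ᶜ := fun z hz =>
          (lt_of_lt_of_le hx0 hz.1).ne'
        have hHcont : ContinuousOn H (Set.Icc (q θ) y) := by
          apply ContinuousOn.mul
          · exact continuousOn_const.mul ((Real.continuousOn_log.mono hsub2).neg.pow _)
          · exact continuousOn_inv₀.mono hsub2
        have hHint : IntegrableOn H (Set.Ioo (q θ) y) :=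
          (hHcont.integrableOn_Icc).mono_set Set.Ioo_subset_Icc_self
        have hHnn : ∀ᵐ z ∂(volume.restrict (Set.Ioo (q θ) y)), 0 ≤ H z := by
          filter_upwards [ae_restrict_mem measurableSet_Ioo] with z hz
          have hz0 : 0 < z := hx0.trans hz.1
          have hz1 : z ≤ 1 := hz.2.le.trans hy1
          apply mul_nonneg (mul_nonneg (Nat.cast_nonneg _)
            (pow_nonneg (neg_nonneg.2 (Real.log_nonpos hz0.le hz1)) _))
          positivity
        have hofReal : ∫⁻ z in Set.Ioo (q θ) y, ENNReal.ofReal (H z)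
            = ENNReal.ofReal (∫ z in Set.Ioo (q θ) y, H z) :=
          (ofReal_integral_eq_lintegral_ofReal hHint hHnn).symm
        have hval : ∫ z in Set.Ioo (q θ) y, H z
            = (-Real.log (q θ))^ℓ - (-Real.log y)^ℓ := by
          rw [← MeasureTheory.integral_Ioc_eq_integral_Ioo,
            ← intervalIntegral.integral_of_le hxy.le]
          exact integral_H ℓ hx0 hxy.le
        rw [hIoo, hofReal, hval]
        have hlog : Real.log (q θ) ≤ Real.log y := Real.log_le_log hx0 hxy.le
        have hple : (-Real.log y)^ℓ ≤ (-Real.log (q θ))^ℓ :=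
          pow_le_pow_left₀ hlogy (neg_le_neg hlog) ℓ
        rw [← ENNReal.ofReal_add (pow_nonneg hlogy ℓ) (sub_nonneg.2 hple)]
        apply le_of_eq
        congr 1
        ring
    · rw [Set.indicator_of_notMem hθ, Set.indicator_of_notMem hθ]
      simp
  have hswap : ∫⁻ θ, (∫⁻ z in Set.Ioo 0 y, G θ z) ∂μ
      = ∫⁻ z in Set.Ioo 0 y, ∫⁻ θ, G θ z ∂μ := by
    apply lintegral_lintegral_swap
    apply Measurable.aemeasurable
    apply Measurable.ite
    · exact measurableSet_lt (hq.comp measurable_fst) measurable_snd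
    · exact ENNReal.measurable_ofReal.comp (hHmeas.comp measurable_snd)
    · exact measurable_const
  have hinner : ∀ z ∈ Set.Ioo (0:ℝ) y, ∫⁻ θ, G θ z ∂μ
      ≤ ENNReal.ofReal (H z * (C * z ^ δ)) := by
    intro z hz
    have hz0 : 0 < z := hz.1
    have hz1 : z ≤ 1 := hz.2.le.trans hy1
    have hGz : ∀ θ, G θ z
        = Set.indicator {θ' | q θ' < z} (fun _ => ENNReal.ofReal (H z)) θ := by
      intro θ
      rw [hG]
      simp [Set.indicator_apply, Set.mem_setOf_eq]
    simp_rw [hGz]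
    rw [lintegral_indicator (measurableSet_lt hq measurable_const), setLIntegral_const]
    have hHz : 0 ≤ H z :=
      mul_nonneg (mul_nonneg (Nat.cast_nonneg _)
        (pow_nonneg (neg_nonneg.2 (Real.log_nonpos hz0.le hz1)) _)) (by positivity)
    calc ENNReal.ofReal (H z) * μ {θ' | q θ' < z}
        ≤ ENNReal.ofReal (H z) * ENNReal.ofReal (C * z ^ δ) :=
          mul_le_mul_right (hbound z hz0 (hz.2.le.trans hyle)) _
      _ = ENNReal.ofReal (H z * (C * z ^ δ)) := (ENNReal.ofReal_mul hHz).symm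
  have hfinal : ∫⁻ z in Set.Ioo 0 y, ENNReal.ofReal (H z * (C * z ^ δ))
      = ENNReal.ofReal (C * ((ℓ:ℝ) * ∫ z in (0:ℝ)..y, (-Real.log z)^(ℓ-1) * z^(δ-1))) := by
    have heq : Set.EqOn (fun z => H z * (C * z ^ δ))
        (fun z => (C * ℓ) * ((-Real.log z)^(ℓ-1) * z^(δ-1))) (Set.Ioo 0 y) := by
      intro z hz
      simp only [hH]
      rw [Real.rpow_sub_one hz.1.ne']
      field_simp
    have hint : IntegrableOn (fun z => H z * (C * z ^ δ)) (Set.Ioo 0 y) := by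
      apply IntegrableOn.congr_fun _ heq.symm measurableSet_Ioo
      exact (((integrableOn_neg_log_pow_rpow (ℓ-1) hδ hy hy1).mono_set
        Set.Ioo_subset_Ioc_self).const_mul (C * ℓ))
    have hnnz : ∀ᵐ z ∂(volume.restrict (Set.Ioo 0 y)), 0 ≤ H z * (C * z ^ δ) := by
      filter_upwards [ae_restrict_mem measurableSet_Ioo] with z hz
      have hz0 : 0 < z := hz.1
      have hz1 : z ≤ 1 := hz.2.le.trans hy1
      have hHz : 0 ≤ H z :=
        mul_nonneg (mul_nonneg (Nat.cast_nonneg _)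
          (pow_nonneg (neg_nonneg.2 (Real.log_nonpos hz0.le hz1)) _)) (by positivity)
      have : (0:ℝ) ≤ C * z ^ δ := by positivity
      exact mul_nonneg hHz this
    rw [← ofReal_integral_eq_lintegral_ofReal hint hnnz]
    congr 1
    rw [setIntegral_congr_fun measurableSet_Ioo heq, MeasureTheory.integral_const_mul,
      ← MeasureTheory.integral_Ioc_eq_integral_Ioo,
      ← intervalIntegral.integral_of_le hy.le]
    ring
  -- assemble
  have hstep1 : ∫⁻ θ,
      ENNReal.ofReal (Set.indicator {θ' | q θ' < y} (fun θ' => (-Real.log (q θ'))^ℓ) θ) ∂μ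
      ≤ (∫⁻ θ, Set.indicator {θ' | q θ' < y}
          (fun _ => ENNReal.ofReal ((-Real.log y)^ℓ)) θ ∂μ)
        + ∫⁻ θ, (∫⁻ z in Set.Ioo 0 y, G θ z) ∂μ := by
    rw [← lintegral_add_left (measurable_const.indicator hSy)]
    exact lintegral_mono claim1
  have hstep2 : (∫⁻ θ, Set.indicator {θ' | q θ' < y}
      (fun _ => ENNReal.ofReal ((-Real.log y)^ℓ)) θ ∂μ)
      ≤ ENNReal.ofReal ((-Real.log y)^ℓ) * ENNReal.ofReal (C * y ^ δ) := by
    rw [lintegral_indicator hSy, setLIntegral_const]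
    exact mul_le_mul_right (hbound y hy hyle) _
  have hstep3 : ∫⁻ θ, (∫⁻ z in Set.Ioo 0 y, G θ z) ∂μ
      ≤ ENNReal.ofReal (C * ((ℓ:ℝ) * ∫ z in (0:ℝ)..y, (-Real.log z)^(ℓ-1) * z^(δ-1))) := by
    rw [hswap, ← hfinal]
    apply setLIntegral_mono (by fun_prop) hinner
  calc ∫⁻ θ, ENNReal.ofReal
        (Set.indicator {θ' | q θ' < y} (fun θ' => (-Real.log (q θ'))^ℓ) θ) ∂μ
      ≤ ENNReal.ofReal ((-Real.log y)^ℓ) * ENNReal.ofReal (C * y ^ δ)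
        + ENNReal.ofReal (C * ((ℓ:ℝ) * ∫ z in (0:ℝ)..y, (-Real.log z)^(ℓ-1) * z^(δ-1))) :=
        hstep1.trans (add_le_add hstep2 hstep3)
    _ = ENNReal.ofReal ((-Real.log y)^ℓ * (C * y ^ δ)
        + C * ((ℓ:ℝ) * ∫ z in (0:ℝ)..y, (-Real.log z)^(ℓ-1) * z^(δ-1))) := by
        rw [← ENNReal.ofReal_mul (pow_nonneg hlogy ℓ), ← ENNReal.ofReal_add]
        · exact mul_nonneg (pow_nonneg hlogy ℓ) (by positivity)
        · exact mul_nonneg hC.le (mul_nonneg (Nat.cast_nonneg _) (hJint (ℓ-1)))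
    _ = ENNReal.ofReal (C * J ℓ δ y) := by
        congr 1
        rw [J_alt, J_key hℓ hδ hy hy1]
        ring

/-- If `μ_n(S_n(P,y)) ≤ C y^δ` for all `0 < y ≤ y₀`, then for all `0 < y ≤ y₀`,
`0 ≤ (−1)^ℓ ∫_{S_n(P,y)} (log|P|)^ℓ dμ_n ≤ C · J_{ℓ,δ}(y)`. -/
theorem signed_log_power_integral_bound_multivariate
    (n : ℕ) (P : MvPolynomial (Fin n) ℂ) (hP : P ≠ 0) (ℓ : ℕ) (hℓ : 1 ≤ ℓ)
    (C δ y₀ : ℝ) (hC : 0 < C) (hδ : 0 < δ) (hy₀ : 0 < y₀) (hy₀1 : y₀ ≤ 1)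
    (hbound : ∀ y : ℝ, 0 < y → y ≤ y₀ →
      volume (torusBox n ∩ Sn P y) ≤ ENNReal.ofReal (C * y ^ δ)) :
    ∀ y : ℝ, 0 < y → y ≤ y₀ →
      0 ≤ (-1:ℝ)^ℓ * ∫ θ in torusBox n,
            Set.indicator (Sn P y) (fun θ' => (Real.log ‖evalTorus P θ'‖)^ℓ) θ ∧
        (-1:ℝ)^ℓ * ∫ θ in torusBox n,
            Set.indicator (Sn P y) (fun θ' => (Real.log ‖evalTorus P θ'‖)^ℓ) θ
          ≤ C * J ℓ δ y := by
  intro y hy hyle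
  have hy1 : y ≤ 1 := hyle.trans hy₀1
  have hqcont : Continuous fun θ : Fin n → ℝ => ‖evalTorus P θ‖ := by
    have hpt : Continuous fun θ : Fin n → ℝ =>
        fun j : Fin n => Complex.exp ((θ j : ℂ) * Complex.I) := by
      apply continuous_pi
      intro j
      exact Complex.continuous_exp.comp
        ((Complex.continuous_ofReal.comp (continuous_apply j)).mul continuous_const)
    have h2 : Continuous (evalTorus P) := (MvPolynomial.continuous_eval (p := P)).comp hpt
    exact continuous_norm.comp h2
  have hq : Measurable fun θ : Fin n → ℝ => ‖evalTorus P θ‖ := hqcont.measurable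
  have hq0 : ∀ θ, 0 ≤ ‖evalTorus P θ‖ := fun θ => norm_nonneg _
  have hbox : MeasurableSet (torusBox n) := MeasurableSet.univ_pi fun _ => measurableSet_Ioc
  have hSn : ∀ t : ℝ, MeasurableSet (Sn P t) := fun t =>
    (isOpen_lt hqcont continuous_const).measurableSet
  -- rewrite the integrand
  have hrw : ∀ θ, (-1:ℝ)^ℓ *
      Set.indicator (Sn P y) (fun θ' => (Real.log ‖evalTorus P θ'‖)^ℓ) θ
      = Set.indicator (Sn P y)
          (fun θ' => (-Real.log (‖evalTorus P θ'‖))^ℓ) θ := by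
    intro θ
    by_cases hθ : θ ∈ Sn P y
    · rw [Set.indicator_of_mem hθ, Set.indicator_of_mem hθ,
        neg_pow (Real.log ‖evalTorus P θ‖) ℓ]
    · rw [Set.indicator_of_notMem hθ, Set.indicator_of_notMem hθ, mul_zero]
  have hIeq : (-1:ℝ)^ℓ * ∫ θ in torusBox n,
      Set.indicator (Sn P y) (fun θ' => (Real.log ‖evalTorus P θ'‖)^ℓ) θ
      = ∫ θ in torusBox n,
        Set.indicator (Sn P y) (fun θ' => (-Real.log (‖evalTorus P θ'‖))^ℓ) θ := by
    rw [← MeasureTheory.integral_const_mul]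
    exact integral_congr_ae (Filter.Eventually.of_forall hrw)
  have hnn : ∀ θ, 0 ≤ Set.indicator (Sn P y)
      (fun θ' => (-Real.log (‖evalTorus P θ'‖))^ℓ) θ := by
    intro θ
    apply Set.indicator_nonneg
    intro θ' hθ'
    have : ‖evalTorus P θ'‖ < y := hθ'
    exact pow_nonneg (neg_nonneg.2 (Real.log_nonpos (hq0 θ')
      (le_of_lt (lt_of_lt_of_le this hy1)))) _
  constructor
  · rw [hIeq]
    exact integral_nonneg hnn
  · rw [hIeq]
    have hbound' : ∀ y' : ℝ, 0 < y' → y' ≤ y₀ →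
        (volume.restrict (torusBox n)) {θ | ‖evalTorus P θ‖ < y'}
          ≤ ENNReal.ofReal (C * y' ^ δ) := by
      intro y' h1 h2
      have hset : {θ : Fin n → ℝ | ‖evalTorus P θ‖ < y'} = Sn P y' := rfl
      rw [hset, Measure.restrict_apply (hSn y'), Set.inter_comm]
      exact hbound y' h1 h2
    exact main_aux (volume.restrict (torusBox n)) _ hq hq0 hℓ hC hδ hy₀1 hbound' hy hyle
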